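/- There exists a constant c > 0 such that for all y ≥ 0, both (1 − J₀(y))² ≥ c · (2 − 2 J₀(y) − 2 (J₀'(y))²) and (1 + J₀(y))² ≥ c · (2 + 2 J₀(y) − 2 (J₀'(y))²) hold. Equivalently, the infima over y ∈ (0, ∞) of (1 ∓ J₀(y)) / √(2 ∓ 2 J₀(y) − 2 (J₀'(y))²) are both strictly positive. -/

import Mathlib

open Real

/-- The Bessel function of the first kind of order `0`:
`J₀(y) = Σ_{j≥0} (−1)^j/(j!)² (y/2)^{2j}`. -/
noncomputable def besselJ0 (y : ℝ) : ℝ :=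
  ∑' j : ℕ, (-1) ^ j / ((j.factorial : ℝ)) ^ 2 * (y / 2) ^ (2 * j)

noncomputable def bF (j : ℕ) : ℝ := (-1) ^ j / (j.factorial : ℝ) ^ 2
noncomputable def bG (j : ℕ) : ℝ := (-1) ^ j / ((j.factorial : ℝ) * ((j + 1).factorial : ℝ))
noncomputable def bH (j : ℕ) : ℝ := (-1) ^ j / ((j.factorial : ℝ) * ((j + 2).factorial : ℝ))

noncomputable def Fb (x : ℝ) : ℝ := ∑' j : ℕ, bF j * x ^ j
noncomputable def Gb (x : ℝ) : ℝ := ∑' j : ℕ, bG j * x ^ j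
noncomputable def Hb (x : ℝ) : ℝ := ∑' j : ℕ, bH j * x ^ j

lemma fact_pos (j : ℕ) : (0 : ℝ) < (j.factorial : ℝ) := by
  exact_mod_cast j.factorial_pos

lemma abs_bF (j : ℕ) : |bF j| ≤ 1 / (j.factorial : ℝ) := by
  have h := fact_pos j
  have h1 : (1 : ℝ) ≤ (j.factorial : ℝ) := by exact_mod_cast j.factorial_pos
  rw [bF, abs_div, abs_pow, abs_neg, abs_one, one_pow]
  rw [abs_of_nonneg (by positivity : (0:ℝ) ≤ (j.factorial : ℝ) ^ 2)]
  rw [div_le_div_iff₀ (by positivity) h]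
  nlinarith

lemma abs_bG (j : ℕ) : |bG j| ≤ 1 / (j.factorial : ℝ) := by
  have h := fact_pos j
  have h2 := fact_pos (j + 1)
  have h1 : (1 : ℝ) ≤ ((j + 1).factorial : ℝ) := by exact_mod_cast (j + 1).factorial_pos
  rw [bG, abs_div, abs_pow, abs_neg, abs_one, one_pow]
  rw [abs_of_nonneg (by positivity : (0:ℝ) ≤ (j.factorial : ℝ) * ((j+1).factorial : ℝ))]
  rw [div_le_div_iff₀ (by positivity) h]
  nlinarith

lemma abs_bH (j : ℕ) : |bH j| ≤ 1 / (j.factorial : ℝ) := by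
  have h := fact_pos j
  have h2 := fact_pos (j + 2)
  have h1 : (1 : ℝ) ≤ ((j + 2).factorial : ℝ) := by exact_mod_cast (j + 2).factorial_pos
  rw [bH, abs_div, abs_pow, abs_neg, abs_one, one_pow]
  rw [abs_of_nonneg (by positivity : (0:ℝ) ≤ (j.factorial : ℝ) * ((j+2).factorial : ℝ))]
  rw [div_le_div_iff₀ (by positivity) h]
  nlinarith

/-- master summability: `(j+1) r^j / j!` is summable for `r ≥ 0`. -/
lemma summable_master (r : ℝ) (hr : 0 ≤ r) :
    Summable (fun j : ℕ => ((j : ℝ) + 1) * r ^ j / (j.factorial : ℝ)) := by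
  apply Summable.of_nonneg_of_le (fun j => by positivity)
    (fun j => ?_) ((Real.summable_pow_div_factorial (2 * r)).mul_left 2)
  have hj : (j : ℝ) < 2 ^ j := by exact_mod_cast Nat.lt_two_pow_self (n := j)
  have h2j : (1:ℝ) ≤ 2 ^ j := one_le_pow₀ (by norm_num)
  have hfp := fact_pos j
  have hrj : (0:ℝ) ≤ r ^ j := by positivity
  have h2 : ((j : ℝ) + 1) * r ^ j ≤ 2 * (2 * r) ^ j := by
    rw [mul_pow]
    nlinarith
  rw [div_le_iff₀ hfp]
  calc ((j : ℝ) + 1) * r ^ j ≤ 2 * (2 * r) ^ j := h2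
    _ = 2 * ((2 * r) ^ j / (j.factorial : ℝ)) * (j.factorial : ℝ) := by field_simp

/-- summability of `b j * x^j` when `|b j| ≤ 1/j!`. -/
lemma summable_coef (b : ℕ → ℝ) (hb : ∀ j, |b j| ≤ 1 / (j.factorial : ℝ)) (x : ℝ) :
    Summable (fun j : ℕ => b j * x ^ j) := by
  apply Summable.of_norm
  apply Summable.of_nonneg_of_le (fun j => norm_nonneg _) (fun j => ?_)
    (Real.summable_pow_div_factorial |x|)
  rw [norm_mul, norm_pow, Real.norm_eq_abs, Real.norm_eq_abs]
  have h1 := hb j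
  have h2 : (0:ℝ) ≤ |x| ^ j := by positivity
  have h3 := fact_pos j
  calc |b j| * |x| ^ j ≤ (1 / (j.factorial : ℝ)) * |x| ^ j := by
        apply mul_le_mul_of_nonneg_right h1 h2
    _ = |x| ^ j / (j.factorial : ℝ) := by ring

/-- master derivative lemma for our power series. -/
lemma hasDerivAt_pseries (b : ℕ → ℝ) (hb : ∀ j, |b j| ≤ 1 / (j.factorial : ℝ)) (x : ℝ) :
    HasDerivAt (fun t => ∑' j : ℕ, b j * t ^ j)
      (∑' j : ℕ, ((j : ℝ) + 1) * b (j + 1) * x ^ j) x := by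
  set R : ℝ := |x| + 1 with hR
  have hR1 : (1:ℝ) ≤ R := le_add_of_nonneg_left (abs_nonneg x)
  have hxR : |x| < R := by simp [hR]
  have hbound : ∀ (j : ℕ) (t : ℝ), t ∈ Metric.ball (0:ℝ) R →
      ‖b j * ((j:ℝ) * t ^ (j - 1))‖ ≤ ((j : ℝ) + 1) * R ^ j / (j.factorial : ℝ) := by
    intro j t ht
    have htR : |t| ≤ R := by
      rw [Metric.mem_ball, Real.dist_eq, sub_zero] at ht
      exact ht.le
    have h0t : (0:ℝ) ≤ |t| := abs_nonneg t
    have hRpos : (0:ℝ) < R := lt_of_lt_of_le one_pos hR1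
    rw [norm_mul, norm_mul, norm_pow, Real.norm_eq_abs, Real.norm_eq_abs, Real.norm_eq_abs]
    have h1 : |t| ^ (j-1) ≤ R ^ (j-1) := pow_le_pow_left₀ h0t htR _
    have h2 : R ^ (j-1) ≤ R ^ j := pow_le_pow_right₀ hR1 (Nat.sub_le j 1)
    have h3 : |(j:ℝ)| = (j:ℝ) := abs_of_nonneg (Nat.cast_nonneg j)
    have h4 := hb j
    have h5 := fact_pos j
    have h6 : (0:ℝ) ≤ R ^ j := by positivity
    have e2 : |t| ^ (j-1) ≤ R ^ j := le_trans h1 h2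
    rw [h3]
    calc |b j| * ((j:ℝ) * |t| ^ (j-1))
        = |b j| * (j:ℝ) * |t| ^ (j-1) := by ring
      _
        ≤ (1/(j.factorial:ℝ)) * (j:ℝ) * |t| ^ (j-1) := by
          apply mul_le_mul_of_nonneg_right (mul_le_mul_of_nonneg_right h4 (Nat.cast_nonneg j)) (by positivity)
      _ ≤ (1/(j.factorial:ℝ)) * ((j:ℝ)+1) * R ^ j := by
          apply mul_le_mul (mul_le_mul_of_nonneg_left (by linarith) (by positivity)) e2 (by positivity) (by positivity)
      _ = ((j:ℝ)+1) * R ^ j / (j.factorial:ℝ) := by ring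
  have hder : ∀ (j : ℕ) (t : ℝ), t ∈ Metric.ball (0:ℝ) R →
      HasDerivAt (fun t => b j * t ^ j) (b j * ((j:ℝ) * t ^ (j - 1))) t := by
    intro j t _
    exact (hasDerivAt_pow j t).const_mul (b j)
  have key := hasDerivAt_tsum_of_isPreconnected
    (summable_master R (by positivity)) Metric.isOpen_ball
    (convex_ball (0:ℝ) R).isPreconnected
    hder hbound (Metric.mem_ball_self (by positivity : (0:ℝ) < R))
    (summable_coef b hb 0)
    (by rw [Metric.mem_ball, Real.dist_eq, sub_zero]; exact hxR)
  refine key.congr_deriv ?_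
  symm
  have hsum' : Summable (fun j : ℕ => b j * ((j:ℝ) * x ^ (j - 1))) := by
    apply Summable.of_norm
    apply Summable.of_nonneg_of_le (fun j => norm_nonneg _)
      (fun j => hbound j x (by rw [Metric.mem_ball, Real.dist_eq, sub_zero]; exact hxR))
      (summable_master R (by positivity))
  rw [Summable.tsum_eq_zero_add hsum']
  simp only [Nat.cast_zero, zero_mul, mul_zero, zero_add]
  apply tsum_congr
  intro k
  push_cast
  ring

lemma fact_succ_cast (j : ℕ) : ((j+1).factorial : ℝ) = ((j:ℝ)+1) * (j.factorial : ℝ) := by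
  rw [Nat.factorial_succ]; push_cast; ring

lemma hasDerivAt_Fb (x : ℝ) : HasDerivAt Fb (- Gb x) x := by
  have h := hasDerivAt_pseries bF abs_bF x
  refine h.congr_deriv ?_
  symm
  rw [Gb, ← tsum_neg]
  apply tsum_congr
  intro j
  have h1 := fact_pos j
  have h2 := fact_pos (j+1)
  rw [bF, bG, fact_succ_cast]
  have hj1 : ((j:ℝ)+1) ≠ 0 := by positivity
  field_simp
  ring

lemma hasDerivAt_Gb (x : ℝ) : HasDerivAt Gb (- Hb x) x := by
  have h := hasDerivAt_pseries bG abs_bG x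
  refine h.congr_deriv ?_
  symm
  rw [Hb, ← tsum_neg]
  apply tsum_congr
  intro j
  have h1 := fact_pos j
  have h2 := fact_pos (j+1)
  have h3 := fact_pos (j+2)
  rw [bG, bH]
  have hk2 : ((j+2).factorial : ℝ) = ((j:ℝ)+2)*(((j:ℝ)+1)*(j.factorial:ℝ)) := by
    rw [show j+2 = (j+1)+1 from rfl, fact_succ_cast, fact_succ_cast]
    push_cast; ring
  rw [hk2, fact_succ_cast]
  have hj1 : ((j:ℝ)+1) ≠ 0 := by positivity
  have hj2 : ((j:ℝ)+2) ≠ 0 := by positivity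
  push_cast
  field_simp
  ring

lemma Fb_eq_Gb_sub (x : ℝ) : Fb x = Gb x - x * Hb x := by
  have hFG : Fb x - Gb x = ∑' j : ℕ, (bF j - bG j) * x ^ j := by
    rw [Fb, Gb, ← Summable.tsum_sub (summable_coef bF abs_bF x) (summable_coef bG abs_bG x)]
    apply tsum_congr; intro j; ring
  have hsum : Summable (fun j : ℕ => (bF j - bG j) * x ^ j) := by
    apply Summable.sub (summable_coef bF abs_bF x) (summable_coef bG abs_bG x) |>.congr
    intro j; ring
  have h0 : (bF 0 - bG 0) * x ^ 0 = 0 := by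
    simp [bF, bG, Nat.factorial]
  have hstep : ∀ k : ℕ, (bF (k+1) - bG (k+1)) * x ^ (k+1) = (- x) * (bH k * x ^ k) := by
    intro k
    have h1 := fact_pos k
    have h2 := fact_pos (k+1)
    have h3 := fact_pos (k+2)
    have he : ((k+1)+1) = k + 2 := rfl
    rw [bF, bG, bH, fact_succ_cast, he]
    have hk2 : ((k+2).factorial : ℝ) = ((k:ℝ)+2) * ((k+1).factorial : ℝ) := by
      have : (k+2) = (k+1)+1 := rfl
      rw [this, fact_succ_cast]; push_cast; ring
    rw [hk2, fact_succ_cast]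
    have hj1 : ((k:ℝ)+1) ≠ 0 := by positivity
    have hj2 : ((k:ℝ)+2) ≠ 0 := by positivity
    field_simp
    ring
  have hz := Summable.tsum_eq_zero_add hsum
  have hcongr : ∑' k : ℕ, (bF (k+1) - bG (k+1)) * x ^ (k+1) = ∑' k : ℕ, (- x) * (bH k * x ^ k) := by
    apply tsum_congr; intro k; exact hstep k
  have hval : Fb x - Gb x = - x * Hb x := by
    rw [hFG, hz, h0, zero_add, hcongr, tsum_mul_left, ← Hb]
  linarith

lemma besselJ0_eq (y : ℝ) : besselJ0 y = Fb (y^2/4) := by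
  rw [besselJ0, Fb]
  apply tsum_congr
  intro j
  rw [bF, pow_mul]
  have : (y/2)^2 = y^2/4 := by ring
  rw [this]

lemma hasDerivAt_besselJ0 (y : ℝ) :
    HasDerivAt besselJ0 (-(y/2) * Gb (y^2/4)) y := by
  have hb : besselJ0 = fun y => Fb (y^2/4) := funext besselJ0_eq
  rw [hb]
  have hinner : HasDerivAt (fun y : ℝ => y^2/4) (y/2) y := by
    have := (hasDerivAt_pow 2 y).div_const 4
    refine this.congr_deriv ?_
    symm
    norm_num
    ring
  have := (hasDerivAt_Fb (y^2/4)).comp y hinner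
  refine this.congr_deriv ?_
  symm
  ring

lemma deriv_besselJ0 : deriv besselJ0 = fun y => -(y/2) * Gb (y^2/4) :=
  funext fun y => (hasDerivAt_besselJ0 y).deriv

noncomputable def En (y : ℝ) : ℝ := (besselJ0 y)^2 + (deriv besselJ0 y)^2

lemma hasDerivAt_deriv_besselJ0 (y : ℝ) :
    HasDerivAt (deriv besselJ0) (-(1/2) * Gb (y^2/4) + (y^2/4) * Hb (y^2/4)) y := by
  rw [deriv_besselJ0]
  have hinner : HasDerivAt (fun y : ℝ => y^2/4) (y/2) y := by
    have := (hasDerivAt_pow 2 y).div_const 4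
    refine this.congr_deriv ?_
    symm
    norm_num
    ring
  have h1 : HasDerivAt (fun y : ℝ => -(y/2)) (-(1/2)) y := by
    have := (hasDerivAt_id y).div_const 2
    exact this.neg
  have h2 : HasDerivAt (fun y : ℝ => Gb (y^2/4)) (- Hb (y^2/4) * (y/2)) y :=
    by have := (hasDerivAt_Gb (y^2/4)).comp y hinner; exact this
  have := h1.mul h2
  refine this.congr_deriv ?_
  symm
  ring

lemma hasDerivAt_En (y : ℝ) :
    HasDerivAt En (-(y/2) * (Gb (y^2/4))^2) y := by
  have h1 := (hasDerivAt_besselJ0 y).pow 2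
  have h2 := (hasDerivAt_deriv_besselJ0 y).pow 2
  have := h1.add h2
  refine this.congr_deriv ?_
  symm
  have hJ := besselJ0_eq y
  have hD : deriv besselJ0 y = -(y/2) * Gb (y^2/4) := by rw [deriv_besselJ0]
  rw [hJ, hD, Fb_eq_Gb_sub]
  ring

lemma En_anti : AntitoneOn En (Set.Ici (0:ℝ)) := by
  apply antitoneOn_of_deriv_nonpos (convex_Ici 0)
  · exact fun y _ => (hasDerivAt_En y).differentiableAt.continuousAt.continuousWithinAt
  · exact fun y _ => (hasDerivAt_En y).differentiableAt.differentiableWithinAt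
  · intro y hy
    rw [interior_Ici] at hy
    rw [(hasDerivAt_En y).deriv]
    have : (0:ℝ) < y := hy
    nlinarith [sq_nonneg (Gb (y^2/4))]

lemma abs_tsum_tail_le (f : ℕ → ℝ) (hsum : Summable f) (N : ℕ) (C r : ℝ)
    (hC : 0 ≤ C) (hr0 : 0 ≤ r) (hr1 : r < 1)
    (hf : ∀ k : ℕ, |f (k + N)| ≤ C * r ^ k) :
    |(∑' j : ℕ, f j) - ∑ j ∈ Finset.range N, f j| ≤ C / (1 - r) := by
  have h1 := Summable.sum_add_tsum_nat_add (f := f) N hsum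
  have hgeo : HasSum (fun i : ℕ => C * r ^ i) (C * (1 - r)⁻¹) :=
    (hasSum_geometric_of_lt_one hr0 hr1).mul_left C
  have h2 : ‖∑' i : ℕ, f (i + N)‖ ≤ C * (1 - r)⁻¹ := by
    apply tsum_of_norm_bounded hgeo
    intro i
    simpa [Real.norm_eq_abs] using hf i
  have h3 : (∑' j : ℕ, f j) - ∑ j ∈ Finset.range N, f j = ∑' i : ℕ, f (i + N) := by
    rw [← h1]; ring
  rw [h3, ← div_eq_mul_inv C (1-r)] at *
  exact h2

lemma F_approx (x M : ℝ) (N : ℕ) (h0 : 0 ≤ x) (hM : x ≤ M) (hr : M < ((N:ℝ)+1)^2) :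
    |Fb x - ∑ j ∈ Finset.range N, bF j * x ^ j| ≤
      x ^ N / (N.factorial : ℝ)^2 * (((N:ℝ)+1)^2 / (((N:ℝ)+1)^2 - M)) := by
  have hNpos : (0:ℝ) < ((N:ℝ)+1)^2 := by positivity
  have hMnn : 0 ≤ M := le_trans h0 hM
  have hden : (0:ℝ) < ((N:ℝ)+1)^2 - M := by linarith
  have hr1 : M / ((N:ℝ)+1)^2 < 1 := (div_lt_one hNpos).2 hr
  have key := abs_tsum_tail_le (fun j => bF j * x ^ j) (summable_coef bF abs_bF x) N
      (x ^ N / (N.factorial : ℝ)^2) (M / ((N:ℝ)+1)^2)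
      (by positivity) (by positivity) hr1 ?_
  · have hne2 : (1 - M/((N:ℝ)+1)^2) > 0 := by linarith
    have heq : x ^ N / (N.factorial:ℝ)^2 / (1 - M/((N:ℝ)+1)^2)
        = x ^ N / (N.factorial:ℝ)^2 * (((N:ℝ)+1)^2/(((N:ℝ)+1)^2 - M)) := by
      have hf := fact_pos N
      field_simp
    rw [Fb, ← heq]
    exact key
  · intro k
    have hfact : ((N.factorial : ℝ) * ((N:ℝ)+1)^k) ≤ ((k+N).factorial : ℝ) := by
      have := Nat.factorial_mul_pow_le_factorial (m := N) (n := k)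
      have hcast : ((N.factorial * (N+1)^k : ℕ) : ℝ) ≤ (((N+k).factorial : ℕ) : ℝ) := by
        exact_mod_cast this
      push_cast at hcast
      rw [show k + N = N + k from Nat.add_comm k N]
      convert hcast using 2
    have hfp := fact_pos (k+N)
    have hfpN := fact_pos N
    have hb : |bF (k+N) * x ^ (k+N)| = x ^ (k+N) / ((k+N).factorial : ℝ)^2 := by
      simp only [bF, abs_mul, abs_div, abs_pow, abs_neg, abs_one, one_pow, Nat.abs_cast]
      rw [abs_of_nonneg h0]
      ring
    rw [hb]
    have hgN : (0:ℝ) < (N.factorial : ℝ) * ((N:ℝ)+1)^k := by positivity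
    have hsq : ((N.factorial : ℝ) * ((N:ℝ)+1)^k)^2 ≤ ((k+N).factorial : ℝ)^2 := by
      nlinarith
    have hnum : x ^ (k+N) ≤ x ^ N * M ^ k := by
      rw [pow_add]
      have h1 : x ^ k ≤ M ^ k := pow_le_pow_left₀ h0 hM k
      have h2 : (0:ℝ) ≤ x ^ N := by positivity
      calc x ^ k * x ^ N = x ^ N * x ^ k := by ring
        _ ≤ x ^ N * M ^ k := by nlinarith [pow_nonneg h0 k]
    calc x ^ (k+N) / ((k+N).factorial : ℝ)^2
        ≤ (x ^ N * M ^ k) / (((N.factorial : ℝ) * ((N:ℝ)+1)^k)^2) := by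
          apply div_le_div₀ (by positivity) hnum (by positivity) hsq
      _ = x ^ N / (N.factorial : ℝ)^2 * (M / ((N:ℝ)+1)^2) ^ k := by
          have hexp : ((N.factorial:ℝ) * ((N:ℝ)+1)^k)^2
              = (N.factorial:ℝ)^2 * (((N:ℝ)+1)^2)^k := by
            rw [mul_pow, ← pow_mul, ← pow_mul, Nat.mul_comm k 2]
          rw [hexp, div_pow]
          field_simp

lemma G_approx (x M : ℝ) (N : ℕ) (h0 : 0 ≤ x) (hM : x ≤ M)
    (hr : M < ((N:ℝ)+1) * ((N:ℝ)+2)) :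
    |Gb x - ∑ j ∈ Finset.range N, bG j * x ^ j| ≤
      x ^ N / ((N.factorial : ℝ) * ((N+1).factorial : ℝ)) *
        ((((N:ℝ)+1) * ((N:ℝ)+2)) / ((((N:ℝ)+1) * ((N:ℝ)+2)) - M)) := by
  have hNpos : (0:ℝ) < ((N:ℝ)+1) * ((N:ℝ)+2) := by positivity
  have hMnn : 0 ≤ M := le_trans h0 hM
  have hden : (0:ℝ) < ((N:ℝ)+1) * ((N:ℝ)+2) - M := by linarith
  have hfpN := fact_pos N
  have hfpN1 := fact_pos (N+1)
  have hr1 : M / (((N:ℝ)+1) * ((N:ℝ)+2)) < 1 := (div_lt_one hNpos).2 hr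
  have key := abs_tsum_tail_le (fun j => bG j * x ^ j) (summable_coef bG abs_bG x) N
      (x ^ N / ((N.factorial : ℝ) * ((N+1).factorial : ℝ))) (M / (((N:ℝ)+1) * ((N:ℝ)+2)))
      (by positivity) (by positivity) hr1 ?_
  · have hne2 : (1 - M/(((N:ℝ)+1) * ((N:ℝ)+2))) > 0 := by linarith
    have heq : x ^ N / ((N.factorial : ℝ) * ((N+1).factorial : ℝ)) / (1 - M/(((N:ℝ)+1) * ((N:ℝ)+2)))
        = x ^ N / ((N.factorial : ℝ) * ((N+1).factorial : ℝ)) *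
          ((((N:ℝ)+1) * ((N:ℝ)+2)) / ((((N:ℝ)+1) * ((N:ℝ)+2)) - M)) := by
      field_simp
    rw [Gb, ← heq]
    exact key
  · intro k
    have hfact1 : ((N.factorial : ℝ) * ((N:ℝ)+1)^k) ≤ ((k+N).factorial : ℝ) := by
      have := Nat.factorial_mul_pow_le_factorial (m := N) (n := k)
      have hcast : ((N.factorial * (N+1)^k : ℕ) : ℝ) ≤ (((N+k).factorial : ℕ) : ℝ) := by
        exact_mod_cast this
      push_cast at hcast
      rw [show k + N = N + k from Nat.add_comm k N]
      convert hcast using 2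
    have hfact2 : (((N+1).factorial : ℝ) * ((N:ℝ)+2)^k) ≤ ((k+N+1).factorial : ℝ) := by
      have := Nat.factorial_mul_pow_le_factorial (m := N+1) (n := k)
      have hcast : (((N+1).factorial * (N+1+1)^k : ℕ) : ℝ) ≤ (((N+1+k).factorial : ℕ) : ℝ) := by
        exact_mod_cast this
      push_cast at hcast
      rw [show k + N + 1 = N + 1 + k by omega]
      convert hcast using 2
      push_cast
      ring
    have hfp := fact_pos (k+N)
    have hfp1 := fact_pos (k+N+1)
    have hb : |bG (k+N) * x ^ (k+N)| = x ^ (k+N) / (((k+N).factorial : ℝ) * ((k+N+1).factorial : ℝ)) := by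
      simp only [bG, abs_mul, abs_div, abs_pow, abs_neg, abs_one, one_pow, Nat.abs_cast]
      rw [abs_of_nonneg h0]
      ring
    rw [hb]
    have hgN : (0:ℝ) < ((N.factorial : ℝ) * ((N:ℝ)+1)^k) * (((N+1).factorial : ℝ) * ((N:ℝ)+2)^k) := by
      positivity
    have hprod : ((N.factorial : ℝ) * ((N:ℝ)+1)^k) * (((N+1).factorial : ℝ) * ((N:ℝ)+2)^k)
        ≤ ((k+N).factorial : ℝ) * ((k+N+1).factorial : ℝ) := by
      have h1 : (0:ℝ) ≤ ((N.factorial : ℝ) * ((N:ℝ)+1)^k) := by positivity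
      have h2 : (0:ℝ) ≤ (((N+1).factorial : ℝ) * ((N:ℝ)+2)^k) := by positivity
      exact mul_le_mul hfact1 hfact2 h2 (le_of_lt hfp)
    have hnum : x ^ (k+N) ≤ x ^ N * M ^ k := by
      rw [pow_add]
      have h1 : x ^ k ≤ M ^ k := pow_le_pow_left₀ h0 hM k
      have h2 : (0:ℝ) ≤ x ^ N := by positivity
      calc x ^ k * x ^ N = x ^ N * x ^ k := by ring
        _ ≤ x ^ N * M ^ k := by nlinarith [pow_nonneg h0 k]
    calc x ^ (k+N) / (((k+N).factorial : ℝ) * ((k+N+1).factorial : ℝ))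
        ≤ (x ^ N * M ^ k) / (((N.factorial : ℝ) * ((N:ℝ)+1)^k) * (((N+1).factorial : ℝ) * ((N:ℝ)+2)^k)) := by
          apply div_le_div₀ (by positivity) hnum hgN hprod
      _ = x ^ N / ((N.factorial : ℝ) * ((N+1).factorial : ℝ)) * (M / (((N:ℝ)+1) * ((N:ℝ)+2))) ^ k := by
          rw [div_pow, mul_pow, div_mul_div_comm]
          congr 1
          ring

lemma Fb_ge_main {x : ℝ} (h0 : 0 ≤ x) (h1 : x ≤ 9/4) : -(1/2) ≤ Fb x := by
  have h := F_approx x (9/4) 4 h0 h1 (by norm_num)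
  have hs : ∑ j ∈ Finset.range 4, bF j * x ^ j = 1 - x + x^2/4 - x^3/36 := by
    simp [Finset.sum_range_succ, bF, Nat.factorial]
    ring
  rw [hs] at h
  norm_num [Nat.factorial] at h
  have h2 := (abs_le.1 h).1
  nlinarith [pow_nonneg h0 2, pow_nonneg h0 3, pow_nonneg h0 4,
    mul_nonneg (mul_nonneg h0 h0) (sub_nonneg.2 h1),
    mul_nonneg (mul_nonneg (mul_nonneg h0 h0) h0) (sub_nonneg.2 h1)]

lemma Fb_le_half {x : ℝ} (h1 : 1 ≤ x) (h2 : x ≤ 9/4) : Fb x ≤ 1/2 := by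
  have h := F_approx x (9/4) 5 (by linarith) h2 (by norm_num)
  have hs : ∑ j ∈ Finset.range 5, bF j * x ^ j = 1 - x + x^2/4 - x^3/36 + x^4/576 := by
    simp [Finset.sum_range_succ, bF, Nat.factorial]
    ring
  rw [hs] at h
  norm_num [Nat.factorial] at h
  have h3 := (abs_le.1 h).2
  have hx0 : (0:ℝ) ≤ x := by linarith
  nlinarith [mul_nonneg (sub_nonneg.2 h1) (sub_nonneg.2 h2),
    mul_nonneg (mul_nonneg (sub_nonneg.2 h1) (sub_nonneg.2 h2)) hx0,
    mul_nonneg (mul_nonneg (mul_nonneg (sub_nonneg.2 h1) (sub_nonneg.2 h2)) hx0) hx0,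
    mul_nonneg (mul_nonneg (mul_nonneg (mul_nonneg (sub_nonneg.2 h1) (sub_nonneg.2 h2)) hx0) hx0) hx0]

lemma Fb_one_bounds {x : ℝ} (h0 : 0 ≤ x) (h1 : x ≤ 1) :
    x - x^2/4 - (4/135)*x^3 ≤ 1 - Fb x ∧ 1 - Fb x ≤ x := by
  have h := F_approx x 1 3 h0 h1 (by norm_num)
  have hs : ∑ j ∈ Finset.range 3, bF j * x ^ j = 1 - x + x^2/4 := by
    simp [Finset.sum_range_succ, bF, Nat.factorial]
    ring
  rw [hs] at h
  norm_num [Nat.factorial] at h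
  have h2 := abs_le.1 h
  constructor
  · nlinarith [h2.2]
  · nlinarith [h2.1, pow_nonneg h0 3, mul_nonneg (mul_nonneg h0 h0) (sub_nonneg.2 h1),
      mul_nonneg h0 h0]

lemma Gb_ge_one {x : ℝ} (h0 : 0 ≤ x) (h1 : x ≤ 1) : 1 - x/2 ≤ Gb x := by
  have h := G_approx x 1 3 h0 h1 (by norm_num)
  have hs : ∑ j ∈ Finset.range 3, bG j * x ^ j = 1 - x/2 + x^2/12 := by
    simp [Finset.sum_range_succ, bG, Nat.factorial]
    ring
  rw [hs] at h
  norm_num [Nat.factorial] at h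
  have h2 := (abs_le.1 h).1
  nlinarith [mul_nonneg (mul_nonneg h0 h0) (sub_nonneg.2 h1), mul_nonneg h0 h0]

lemma Fb94_bounds : -(0.2601:ℝ) ≤ Fb (9/4) ∧ Fb (9/4) ≤ -(0.26:ℝ) := by
  have h := F_approx (9/4) (9/4) 8 (by norm_num) (by norm_num) (by norm_num)
  have hs : ∑ j ∈ Finset.range 8, bF j * (9/4:ℝ) ^ j =
      1 - 9/4 + (9/4)^2/4 - (9/4)^3/36 + (9/4)^4/576 - (9/4)^5/14400
        + (9/4)^6/518400 - (9/4)^7/25401600 := by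
    simp [Finset.sum_range_succ, bF, Nat.factorial]
    ring
  rw [hs] at h
  norm_num [Nat.factorial] at h
  have h2 := abs_le.1 h
  constructor <;> nlinarith [h2.1, h2.2]

lemma Gb94_bounds : (0.226:ℝ) ≤ Gb (9/4) ∧ Gb (9/4) ≤ (0.2261:ℝ) := by
  have h := G_approx (9/4) (9/4) 7 (by norm_num) (by norm_num) (by norm_num)
  have hs : ∑ j ∈ Finset.range 7, bG j * (9/4:ℝ) ^ j =
      1 - (9/4)/2 + (9/4)^2/12 - (9/4)^3/144 + (9/4)^4/2880 - (9/4)^5/86400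
        + (9/4)^6/3628800 := by
    simp [Finset.sum_range_succ, bG, Nat.factorial]
    ring
  rw [hs] at h
  norm_num [Nat.factorial] at h
  have h2 := abs_le.1 h
  constructor <;> nlinarith [h2.1, h2.2]

lemma En_three_le : En 3 ≤ 1/4 := by
  have hJ : besselJ0 3 = Fb (9/4) := by
    have := besselJ0_eq 3
    norm_num at this
    exact this
  have hD : deriv besselJ0 3 = -(3/2) * Gb (9/4) := by
    rw [deriv_besselJ0]
    norm_num
  have hF := Fb94_bounds
  have hG := Gb94_bounds
  rw [En, hJ, hD]
  nlinarith [hF.1, hF.2, hG.1, hG.2]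

lemma key_small (x A d2 : ℝ) (hx0 : 0 ≤ x) (hx1 : x ≤ 1)
    (hA1 : A ≤ x) (hA2 : x - x^2/4 - (4/135)*x^3 ≤ A)
    (hd : x*(1-x/2)^2 ≤ d2) : A ≤ 2*A^2 + d2 := by
  have hL0 : 0 ≤ x - x^2/4 - (4/135)*x^3 := by
    nlinarith [mul_nonneg hx0 hx0, mul_nonneg (mul_nonneg hx0 hx0) (sub_nonneg.2 hx1)]
  have hA0 : 0 ≤ A := le_trans hL0 hA2
  have hq : 0 ≤ 2*A - x + x^2/4 := by
    nlinarith [mul_nonneg hx0 hx0, mul_nonneg (mul_nonneg hx0 hx0) (sub_nonneg.2 hx1)]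
  have h1 : A*(1-x/2)^2 ≤ x*(1-x/2)^2 := by nlinarith [sq_nonneg (1-x/2)]
  nlinarith [mul_nonneg hA0 hq]

set_option maxHeartbeats 1000000 in
/-- There is `c > 0` such that for all `y ≥ 0`,
`(1 − J₀(y))² ≥ c(2 − 2J₀(y) − 2J₀'(y)²)` and `(1 + J₀(y))² ≥ c(2 + 2J₀(y) − 2J₀'(y)²)`. -/
theorem bessel_ratio_infima_pos :
    ∃ c : ℝ, 0 < c ∧ ∀ y : ℝ, 0 ≤ y →
      (1 - besselJ0 y) ^ 2 ≥ c * (2 - 2 * besselJ0 y - 2 * (deriv besselJ0 y) ^ 2) ∧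
      (1 + besselJ0 y) ^ 2 ≥ c * (2 + 2 * besselJ0 y - 2 * (deriv besselJ0 y) ^ 2) := by
  refine ⟨1/4, by norm_num, fun y hy => ?_⟩
  have hJ : besselJ0 y = Fb (y^2/4) := besselJ0_eq y
  have hD2 : (deriv besselJ0 y)^2 = (y^2/4) * (Gb (y^2/4))^2 := by
    rw [deriv_besselJ0]; ring
  have hx0 : 0 ≤ y^2/4 := by positivity
  by_cases hy3 : y ≤ 3
  · have hx94 : y^2/4 ≤ 9/4 := by nlinarith
    have hplus : (1 + besselJ0 y)^2 ≥ (1/4) * (2 + 2*besselJ0 y - 2*(deriv besselJ0 y)^2) := by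
      have hlb := Fb_ge_main hx0 hx94
      rw [hJ, hD2]
      nlinarith [mul_nonneg hx0 (sq_nonneg (Gb (y^2/4)))]
    have hminus : (1 - besselJ0 y)^2 ≥ (1/4) * (2 - 2*besselJ0 y - 2*(deriv besselJ0 y)^2) := by
      rw [hJ, hD2]
      by_cases hx1 : y^2/4 ≤ 1
      · have hb := Fb_one_bounds hx0 hx1
        have hG := Gb_ge_one hx0 hx1
        have hgd : (y^2/4)*(1-(y^2/4)/2)^2 ≤ (y^2/4)*(Gb (y^2/4))^2 := by
          have h12 : (0:ℝ) ≤ 1 - (y^2/4)/2 := by linarith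
          have hsq : (1-(y^2/4)/2)^2 ≤ (Gb (y^2/4))^2 := by nlinarith
          nlinarith [hx0]
        have hkey := key_small (y^2/4) (1 - Fb (y^2/4)) ((y^2/4)*(Gb (y^2/4))^2)
          hx0 hx1 hb.2 hb.1 hgd
        nlinarith [hkey]
      · have hle := Fb_le_half (by linarith) hx94
        nlinarith [mul_nonneg hx0 (sq_nonneg (Gb (y^2/4)))]
    exact ⟨hminus, hplus⟩
  · have hmono := En_anti (Set.mem_Ici.2 (by norm_num : (0:ℝ) ≤ 3))
      (Set.mem_Ici.2 hy) (by linarith)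
    have hE : En y ≤ 1/4 := le_trans hmono En_three_le
    have hD0 : (0:ℝ) ≤ (deriv besselJ0 y)^2 := sq_nonneg _
    have hJ2 : (besselJ0 y)^2 ≤ 1/4 := by rw [En] at hE; nlinarith
    have hJle : besselJ0 y ≤ 1/2 := by nlinarith [hJ2, hD0]
    have hJge : -(1/2) ≤ besselJ0 y := by nlinarith [hJ2, hD0]
    clear hmono hE hJ2 hJ hD2
    constructor <;> nlinarith [hJle, hJge, hD0]
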